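/- HOC consistency: let d > 0, c ∈ ℝ, and let u be C^6 with bounded sixth derivative and g C^4 with bounded fourth derivative satisfying d·u'' + c·u' = g. Then the residual of the compact scheme, namely d·δ²_h u(x) + c·δ_{0h} u(x) + (h²/12)(c²/d)·δ²_h u(x) − g(x) − (h²/12)[(c/d)·δ_{0h} g(x) + δ²_h g(x)], is O(h^4), i.e. bounded by C·h^4 with C depending only on c, d, and bounds on derivatives of u and g. -/

import Mathlib

open Finset in
lemma taylor_crude (M : ℝ) : ∀ (n : ℕ) (v : ℝ → ℝ), ContDiff ℝ n v →
    (∀ y, |iteratedDeriv n v y| ≤ M) → ∀ x t : ℝ,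
    |v (x + t) - ∑ i ∈ Finset.range n, iteratedDeriv i v x * t ^ i / (i.factorial : ℝ)|
      ≤ M * |t| ^ n := by
  intro n
  induction n with
  | zero =>
    intro v _ hb x t
    simpa using hb (x + t)
  | succ n ih =>
    intro v hv hb x t
    have hM : 0 ≤ M := le_trans (abs_nonneg _) (hb 0)
    have hv' : ContDiff ℝ ((n : WithTop ℕ∞) + 1) v := by exact_mod_cast hv
    have hvd : Differentiable ℝ v := (contDiff_succ_iff_deriv.mp hv').1
    have hw : ContDiff ℝ n (deriv v) := (contDiff_succ_iff_deriv.mp hv').2.2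
    have hb' : ∀ y, |iteratedDeriv n (deriv v) y| ≤ M := by
      intro y; rw [← iteratedDeriv_succ']; exact hb y
    set f : ℝ → ℝ := fun s =>
      v (x + s) - ∑ i ∈ Finset.range (n + 1), iteratedDeriv i v x * s ^ i / (i.factorial : ℝ)
      with hf
    have hf0 : f 0 = 0 := by
      simp [hf, Finset.sum_range_succ']
    have hder : ∀ s : ℝ, HasDerivAt f
        (deriv v (x + s) - ∑ i ∈ Finset.range n, iteratedDeriv i (deriv v) x * s ^ i / (i.factorial : ℝ)) s := by
      intro s
      have h1 : HasDerivAt (fun s : ℝ => v (x + s)) (deriv v (x + s)) s := by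
        have hinner : HasDerivAt (fun s : ℝ => x + s) 1 s := (hasDerivAt_id s).const_add x
        have hc := hvd.differentiableAt.hasDerivAt.comp s hinner
        rwa [mul_one] at hc
      have h2 : HasDerivAt (fun s : ℝ => ∑ i ∈ Finset.range (n + 1),
          iteratedDeriv i v x * s ^ i / (i.factorial : ℝ))
          (∑ i ∈ Finset.range (n + 1), iteratedDeriv i v x * ((i : ℝ) * s ^ (i - 1)) / (i.factorial : ℝ)) s := by
        apply HasDerivAt.fun_sum
        intro i _
        exact ((hasDerivAt_pow i s).const_mul (iteratedDeriv i v x)).div_const _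
      have h3 : (∑ i ∈ Finset.range (n + 1), iteratedDeriv i v x * ((i : ℝ) * s ^ (i - 1)) / (i.factorial : ℝ))
          = ∑ i ∈ Finset.range n, iteratedDeriv i (deriv v) x * s ^ i / (i.factorial : ℝ) := by
        rw [Finset.sum_range_succ']
        simp only [Nat.cast_zero, Nat.factorial_zero]
        rw [show (iteratedDeriv 0 v x * ((0:ℝ) * s ^ (0 - 1)) / ((1:ℕ) : ℝ)) = 0 by ring]
        rw [add_zero]
        apply Finset.sum_congr rfl
        intro i _
        rw [← iteratedDeriv_succ']
        have hfac : ((i + 1).factorial : ℝ) = (i + 1) * (i.factorial : ℝ) := by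
          rw [Nat.factorial_succ]; push_cast; ring
        rw [hfac]
        have h1 : ((i.factorial : ℝ)) ≠ 0 := Nat.cast_ne_zero.mpr (Nat.factorial_ne_zero i)
        have h2 : ((i : ℝ) + 1) ≠ 0 := by positivity
        field_simp
        rw [Nat.add_sub_cancel]; push_cast
        ring
      rw [← h3]
      exact h1.sub h2
    have hbound : ∀ s ∈ Set.uIcc (0 : ℝ) t,
        ‖deriv v (x + s) - ∑ i ∈ Finset.range n, iteratedDeriv i (deriv v) x * s ^ i / (i.factorial : ℝ)‖
          ≤ M * |t| ^ n := by
      intro s hs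
      have hst : |s| ≤ |t| := by
        rcases Set.mem_uIcc.mp hs with ⟨h1, h2⟩ | ⟨h1, h2⟩ <;>
          exact abs_le.mpr ⟨by linarith [neg_abs_le t, abs_nonneg t],
            by linarith [le_abs_self t, abs_nonneg t]⟩
      calc ‖_‖ ≤ M * |s| ^ n := ih (deriv v) hw hb' x s
        _ ≤ M * |t| ^ n := by
            apply mul_le_mul_of_nonneg_left _ hM
            exact pow_le_pow_left₀ (abs_nonneg s) hst n
    have key := Convex.norm_image_sub_le_of_norm_hasDerivWithin_le
      (f' := fun s => deriv v (x + s) - ∑ i ∈ Finset.range n, iteratedDeriv i (deriv v) x * s ^ i / (i.factorial : ℝ))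
      (fun s _ => (hder s).hasDerivWithinAt) hbound (convex_uIcc 0 t)
      Set.left_mem_uIcc Set.right_mem_uIcc
    rw [hf0, sub_zero, sub_zero] at key
    calc |f t| ≤ M * |t| ^ n * ‖t‖ := key
      _ = M * |t| ^ (n + 1) := by rw [Real.norm_eq_abs]; ring

set_option maxHeartbeats 2000000 in
/-- Fourth-order consistency of the high-order compact (HOC) scheme. -/
theorem hoc_scheme_fourth_order_consistency
    (c d Mu Mg : ℝ) (hd : 0 < d) :
    ∃ C : ℝ, 0 < C ∧ ∀ (u g : ℝ → ℝ) (x h : ℝ), 0 < h →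
      ContDiff ℝ 6 u → ContDiff ℝ 4 g →
      (∀ i : ℕ, i ≤ 6 → ∀ y : ℝ, |iteratedDeriv i u y| ≤ Mu) →
      (∀ i : ℕ, i ≤ 4 → ∀ y : ℝ, |iteratedDeriv i g y| ≤ Mg) →
      (∀ y : ℝ, d * iteratedDeriv 2 u y + c * deriv u y = g y) →
      (let d0 : (ℝ → ℝ) → ℝ → ℝ := fun v t => (v (t + h) - v (t - h)) / (2 * h)
       let d2 : (ℝ → ℝ) → ℝ → ℝ := fun v t => (v (t + h) - 2 * v t + v (t - h)) / h ^ 2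
       |d * d2 u x + c * d0 u x + h ^ 2 / 12 * (c ^ 2 / d) * d2 u x
          - g x - h ^ 2 / 12 * ((c / d) * d0 g x + d2 g x)| ≤ C * h ^ 4) := by
  refine ⟨2 * d * |Mu| + |c| * |Mu| + c ^ 2 / d * |Mu| / 6 + |c| / d * |Mg| / 12 + |Mg| / 6 + 1, ?_, ?_⟩
  · have h1 : (0:ℝ) ≤ 2 * d * |Mu| := by positivity
    have h2 : (0:ℝ) ≤ |c| * |Mu| := by positivity
    have h3 : (0:ℝ) ≤ c ^ 2 / d * |Mu| / 6 := by positivity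
    have h4 : (0:ℝ) ≤ |c| / d * |Mg| / 12 := by positivity
    have h5 : (0:ℝ) ≤ |Mg| / 6 := by positivity
    linarith
  intro u g x h hh hu hg hbu hbg heq
  show |d * ((u (x + h) - 2 * u x + u (x - h)) / h ^ 2)
        + c * ((u (x + h) - u (x - h)) / (2 * h))
        + h ^ 2 / 12 * (c ^ 2 / d) * ((u (x + h) - 2 * u x + u (x - h)) / h ^ 2)
        - g x
        - h ^ 2 / 12 * ((c / d) * ((g (x + h) - g (x - h)) / (2 * h))
            + (g (x + h) - 2 * g x + g (x - h)) / h ^ 2)|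
      ≤ (2 * d * |Mu| + |c| * |Mu| + c ^ 2 / d * |Mu| / 6 + |c| / d * |Mg| / 12 + |Mg| / 6 + 1) * h ^ 4

  -- basic facts
  have hd0 : d ≠ 0 := ne_of_gt hd
  have hh0 : h ≠ 0 := ne_of_gt hh
  have habs : |h| = h := abs_of_pos hh
  have habsm : |(-h)| = h := by rw [abs_neg, habs]
  have hxm : x + -h = x - h := by ring
  -- smoothness at various orders
  have hu6 : ContDiff ℝ (6 : ℕ) u := by exact_mod_cast hu
  have hu5 : ContDiff ℝ (5 : ℕ) u := hu6.of_le (by norm_cast)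
  have hu4 : ContDiff ℝ (4 : ℕ) u := hu6.of_le (by norm_cast)
  have hg4 : ContDiff ℝ (4 : ℕ) g := by exact_mod_cast hg
  have hg3 : ContDiff ℝ (3 : ℕ) g := hg4.of_le (by norm_cast)
  have hMu : ∀ i : ℕ, i ≤ 6 → ∀ y, |iteratedDeriv i u y| ≤ |Mu| :=
    fun i hi y => (hbu i hi y).trans (le_abs_self Mu)
  have hMg : ∀ i : ℕ, i ≤ 4 → ∀ y, |iteratedDeriv i g y| ≤ |Mg| :=
    fun i hi y => (hbg i hi y).trans (le_abs_self Mg)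
  -- Taylor estimates
  have T6p := taylor_crude |Mu| 6 u hu6 (hMu 6 le_rfl) x h
  have T6m := taylor_crude |Mu| 6 u hu6 (hMu 6 le_rfl) x (-h)
  have T5p := taylor_crude |Mu| 5 u hu5 (hMu 5 (by norm_num)) x h
  have T5m := taylor_crude |Mu| 5 u hu5 (hMu 5 (by norm_num)) x (-h)
  have T4p := taylor_crude |Mu| 4 u hu4 (hMu 4 (by norm_num)) x h
  have T4m := taylor_crude |Mu| 4 u hu4 (hMu 4 (by norm_num)) x (-h)
  have G4p := taylor_crude |Mg| 4 g hg4 (hMg 4 le_rfl) x h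
  have G4m := taylor_crude |Mg| 4 g hg4 (hMg 4 le_rfl) x (-h)
  have G3p := taylor_crude |Mg| 3 g hg3 (hMg 3 (by norm_num)) x h
  have G3m := taylor_crude |Mg| 3 g hg3 (hMg 3 (by norm_num)) x (-h)
  rw [habs] at T6p T5p T4p G4p G3p
  rw [habsm, hxm] at T6m T5m T4m G4m G3m
  -- error identities
  have e1 : (u (x + h) - 2 * u x + u (x - h)) / h ^ 2
        - (iteratedDeriv 2 u x + h ^ 2 / 12 * iteratedDeriv 4 u x)
      = ((u (x + h) - ∑ i ∈ Finset.range 6, iteratedDeriv i u x * h ^ i / (i.factorial : ℝ))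
        + (u (x - h) - ∑ i ∈ Finset.range 6, iteratedDeriv i u x * (-h) ^ i / (i.factorial : ℝ))) / h ^ 2 := by
    simp only [Finset.sum_range_succ, Finset.sum_range_zero, iteratedDeriv_zero]
    norm_num [Nat.factorial]
    field_simp
    ring
  have e2 : (u (x + h) - u (x - h)) / (2 * h)
        - (iteratedDeriv 1 u x + h ^ 2 / 6 * iteratedDeriv 3 u x)
      = ((u (x + h) - ∑ i ∈ Finset.range 5, iteratedDeriv i u x * h ^ i / (i.factorial : ℝ))
        - (u (x - h) - ∑ i ∈ Finset.range 5, iteratedDeriv i u x * (-h) ^ i / (i.factorial : ℝ))) / (2 * h) := by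
    simp only [Finset.sum_range_succ, Finset.sum_range_zero, iteratedDeriv_zero]
    norm_num [Nat.factorial]
    field_simp
    ring
  have e3 : (u (x + h) - 2 * u x + u (x - h)) / h ^ 2 - iteratedDeriv 2 u x
      = ((u (x + h) - ∑ i ∈ Finset.range 4, iteratedDeriv i u x * h ^ i / (i.factorial : ℝ))
        + (u (x - h) - ∑ i ∈ Finset.range 4, iteratedDeriv i u x * (-h) ^ i / (i.factorial : ℝ))) / h ^ 2 := by
    simp only [Finset.sum_range_succ, Finset.sum_range_zero, iteratedDeriv_zero]
    norm_num [Nat.factorial]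
    field_simp
    ring
  have e4 : (g (x + h) - g (x - h)) / (2 * h) - iteratedDeriv 1 g x
      = ((g (x + h) - ∑ i ∈ Finset.range 3, iteratedDeriv i g x * h ^ i / (i.factorial : ℝ))
        - (g (x - h) - ∑ i ∈ Finset.range 3, iteratedDeriv i g x * (-h) ^ i / (i.factorial : ℝ))) / (2 * h) := by
    simp only [Finset.sum_range_succ, Finset.sum_range_zero, iteratedDeriv_zero]
    norm_num [Nat.factorial]
    field_simp
    ring
  have e5 : (g (x + h) - 2 * g x + g (x - h)) / h ^ 2 - iteratedDeriv 2 g x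
      = ((g (x + h) - ∑ i ∈ Finset.range 4, iteratedDeriv i g x * h ^ i / (i.factorial : ℝ))
        + (g (x - h) - ∑ i ∈ Finset.range 4, iteratedDeriv i g x * (-h) ^ i / (i.factorial : ℝ))) / h ^ 2 := by
    simp only [Finset.sum_range_succ, Finset.sum_range_zero, iteratedDeriv_zero]
    norm_num [Nat.factorial]
    field_simp
    ring
  -- error bounds
  have hA1 : |(u (x + h) - 2 * u x + u (x - h)) / h ^ 2
        - (iteratedDeriv 2 u x + h ^ 2 / 12 * iteratedDeriv 4 u x)| ≤ 2 * |Mu| * h ^ 4 := by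
    rw [e1, abs_div, abs_of_pos (by positivity : (0:ℝ) < h ^ 2),
      div_le_iff₀ (by positivity : (0:ℝ) < h ^ 2)]
    exact le_trans ((abs_add_le _ _).trans (add_le_add T6p T6m)) (le_of_eq (by ring))
  have hA2 : |(u (x + h) - u (x - h)) / (2 * h)
        - (iteratedDeriv 1 u x + h ^ 2 / 6 * iteratedDeriv 3 u x)| ≤ |Mu| * h ^ 4 := by
    rw [e2, abs_div, abs_of_pos (by positivity : (0:ℝ) < 2 * h),
      div_le_iff₀ (by positivity : (0:ℝ) < 2 * h)]
    exact le_trans ((abs_sub _ _).trans (add_le_add T5p T5m)) (le_of_eq (by ring))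
  have hA3 : |(u (x + h) - 2 * u x + u (x - h)) / h ^ 2 - iteratedDeriv 2 u x| ≤ 2 * |Mu| * h ^ 2 := by
    rw [e3, abs_div, abs_of_pos (by positivity : (0:ℝ) < h ^ 2),
      div_le_iff₀ (by positivity : (0:ℝ) < h ^ 2)]
    exact le_trans ((abs_add_le _ _).trans (add_le_add T4p T4m)) (le_of_eq (by ring))
  have hA4 : |(g (x + h) - g (x - h)) / (2 * h) - iteratedDeriv 1 g x| ≤ |Mg| * h ^ 2 := by
    rw [e4, abs_div, abs_of_pos (by positivity : (0:ℝ) < 2 * h),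
      div_le_iff₀ (by positivity : (0:ℝ) < 2 * h)]
    exact le_trans ((abs_sub _ _).trans (add_le_add G3p G3m)) (le_of_eq (by ring))
  have hA5 : |(g (x + h) - 2 * g x + g (x - h)) / h ^ 2 - iteratedDeriv 2 g x| ≤ 2 * |Mg| * h ^ 2 := by
    rw [e5, abs_div, abs_of_pos (by positivity : (0:ℝ) < h ^ 2),
      div_le_iff₀ (by positivity : (0:ℝ) < h ^ 2)]
    exact le_trans ((abs_add_le _ _).trans (add_le_add G4p G4m)) (le_of_eq (by ring))
  -- derivative identities for g
  have hdiffu : ∀ k : ℕ, k ≤ 5 → Differentiable ℝ (iteratedDeriv k u) := by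
    intro k hk
    exact hu.differentiable_iteratedDeriv k (by exact_mod_cast (show k < 6 by omega))
  have hgeq : g = fun y => d * iteratedDeriv 2 u y + c * iteratedDeriv 1 u y := by
    funext y
    rw [← heq y, iteratedDeriv_one]
  have hg1 : ∀ y, deriv g y = d * iteratedDeriv 3 u y + c * iteratedDeriv 2 u y := by
    intro y
    rw [hgeq, deriv_fun_add (((hdiffu 2 (by norm_num)) y).const_mul d)
        (((hdiffu 1 (by norm_num)) y).const_mul c),
      deriv_const_mul d ((hdiffu 2 (by norm_num)) y),
      deriv_const_mul c ((hdiffu 1 (by norm_num)) y)]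
    rw [show deriv (iteratedDeriv 2 u) = iteratedDeriv 3 u from (iteratedDeriv_succ).symm,
      show deriv (iteratedDeriv 1 u) = iteratedDeriv 2 u from (iteratedDeriv_succ).symm]
  have hg1x : iteratedDeriv 1 g x = d * iteratedDeriv 3 u x + c * iteratedDeriv 2 u x := by
    rw [iteratedDeriv_one]; exact hg1 x
  have hg2x : iteratedDeriv 2 g x = d * iteratedDeriv 4 u x + c * iteratedDeriv 3 u x := by
    rw [show (2:ℕ) = 1 + 1 from rfl, iteratedDeriv_succ, iteratedDeriv_one,
      show deriv g = fun y => d * iteratedDeriv 3 u y + c * iteratedDeriv 2 u y from funext hg1,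
      deriv_fun_add (((hdiffu 3 (by norm_num)) x).const_mul d)
        (((hdiffu 2 (by norm_num)) x).const_mul c),
      deriv_const_mul d ((hdiffu 3 (by norm_num)) x),
      deriv_const_mul c ((hdiffu 2 (by norm_num)) x),
      show deriv (iteratedDeriv 3 u) = iteratedDeriv 4 u from (iteratedDeriv_succ).symm,
      show deriv (iteratedDeriv 2 u) = iteratedDeriv 3 u from (iteratedDeriv_succ).symm]
  have heqx : d * iteratedDeriv 2 u x + c * iteratedDeriv 1 u x = g x := by
    rw [iteratedDeriv_one]; exact heq x
  have hb2 : (c / d) * iteratedDeriv 1 g x + iteratedDeriv 2 g x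
      = d * iteratedDeriv 4 u x + 2 * c * iteratedDeriv 3 u x
        + c ^ 2 / d * iteratedDeriv 2 u x := by
    rw [hg1x, hg2x]; field_simp; ring
  -- key algebraic decomposition
  have hkey : d * ((u (x + h) - 2 * u x + u (x - h)) / h ^ 2)
        + c * ((u (x + h) - u (x - h)) / (2 * h))
        + h ^ 2 / 12 * (c ^ 2 / d) * ((u (x + h) - 2 * u x + u (x - h)) / h ^ 2)
        - g x
        - h ^ 2 / 12 * ((c / d) * ((g (x + h) - g (x - h)) / (2 * h))
            + (g (x + h) - 2 * g x + g (x - h)) / h ^ 2)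
      = d * ((u (x + h) - 2 * u x + u (x - h)) / h ^ 2
            - (iteratedDeriv 2 u x + h ^ 2 / 12 * iteratedDeriv 4 u x))
        + c * ((u (x + h) - u (x - h)) / (2 * h)
            - (iteratedDeriv 1 u x + h ^ 2 / 6 * iteratedDeriv 3 u x))
        + h ^ 2 / 12 * (c ^ 2 / d) * ((u (x + h) - 2 * u x + u (x - h)) / h ^ 2
            - iteratedDeriv 2 u x)
        - h ^ 2 / 12 * ((c / d) * ((g (x + h) - g (x - h)) / (2 * h) - iteratedDeriv 1 g x)
            + ((g (x + h) - 2 * g x + g (x - h)) / h ^ 2 - iteratedDeriv 2 g x)) := by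
    linear_combination heqx - h ^ 2 / 12 * hb2
  rw [hkey]
  -- final bound
  have b1 : |d * ((u (x + h) - 2 * u x + u (x - h)) / h ^ 2
        - (iteratedDeriv 2 u x + h ^ 2 / 12 * iteratedDeriv 4 u x))| ≤ d * (2 * |Mu| * h ^ 4) := by
    rw [abs_mul, abs_of_pos hd]
    exact mul_le_mul_of_nonneg_left hA1 hd.le
  have b2 : |c * ((u (x + h) - u (x - h)) / (2 * h)
        - (iteratedDeriv 1 u x + h ^ 2 / 6 * iteratedDeriv 3 u x))| ≤ |c| * (|Mu| * h ^ 4) := by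
    rw [abs_mul]
    exact mul_le_mul_of_nonneg_left hA2 (abs_nonneg c)
  have b3 : |h ^ 2 / 12 * (c ^ 2 / d) * ((u (x + h) - 2 * u x + u (x - h)) / h ^ 2
        - iteratedDeriv 2 u x)| ≤ h ^ 2 / 12 * (c ^ 2 / d) * (2 * |Mu| * h ^ 2) := by
    rw [abs_mul, abs_of_nonneg (show (0:ℝ) ≤ h ^ 2 / 12 * (c ^ 2 / d) by positivity)]
    exact mul_le_mul_of_nonneg_left hA3 (by positivity)
  have b4 : |h ^ 2 / 12 * ((c / d) * ((g (x + h) - g (x - h)) / (2 * h) - iteratedDeriv 1 g x)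
        + ((g (x + h) - 2 * g x + g (x - h)) / h ^ 2 - iteratedDeriv 2 g x))|
      ≤ h ^ 2 / 12 * (|c| / d * (|Mg| * h ^ 2) + 2 * |Mg| * h ^ 2) := by
    rw [abs_mul, abs_of_nonneg (show (0:ℝ) ≤ h ^ 2 / 12 by positivity)]
    apply mul_le_mul_of_nonneg_left _ (by positivity)
    refine (abs_add_le _ _).trans (add_le_add ?_ hA5)
    rw [abs_mul, abs_div, abs_of_pos hd]
    exact mul_le_mul_of_nonneg_left hA4 (by positivity)
  have tri : ∀ a b e f : ℝ, |a + b + e - f| ≤ |a| + |b| + |e| + |f| := by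
    intro a b e f
    calc |a + b + e - f| ≤ |a + b + e| + |f| := abs_sub _ _
      _ ≤ |a + b| + |e| + |f| := by linarith [abs_add_le (a + b) e]
      _ ≤ |a| + |b| + |e| + |f| := by linarith [abs_add_le a b]
  refine le_trans (tri _ _ _ _) ?_
  have h4 : (0:ℝ) ≤ h ^ 4 := by positivity
  nlinarith [b1, b2, b3, b4, h4]
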